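/- Fix Δ > 0 and σ > 0. The function ε ↦ Φ(Δ/(2σ) − εσ/Δ) − e^ε·Φ(−Δ/(2σ) − εσ/Δ) is (weakly) monotone decreasing on [0, ∞). -/

import Mathlib

open MeasureTheory Real Set Filter

/-- The standard normal CDF. -/
noncomputable def stdΦ (x : ℝ) : ℝ :=
  (Real.sqrt (2 * Real.pi))⁻¹ * ∫ t in Set.Iic x, Real.exp (-t ^ 2 / 2)

lemma gauss_integrable : MeasureTheory.Integrable (fun t : ℝ => Real.exp (-t ^ 2 / 2)) := by
  have := integrable_exp_neg_mul_sq (b := (1/2 : ℝ)) (by norm_num)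
  convert this using 2 with t
  ring_nf

lemma stdΦ_nonneg (x : ℝ) : 0 ≤ stdΦ x := by
  apply mul_nonneg (inv_nonneg.2 (Real.sqrt_nonneg _))
  exact MeasureTheory.integral_nonneg fun t => (Real.exp_pos _).le

lemma stdΦ_hasDerivAt (x : ℝ) :
    HasDerivAt stdΦ ((Real.sqrt (2 * Real.pi))⁻¹ * Real.exp (-x ^ 2 / 2)) x := by
  have hint := gauss_integrable
  have heq : stdΦ = fun y : ℝ =>
      (Real.sqrt (2 * Real.pi))⁻¹ *
        ((∫ t in Set.Iic (0:ℝ), Real.exp (-t ^ 2 / 2)) +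
          ∫ t in (0:ℝ)..y, Real.exp (-t ^ 2 / 2)) := by
    funext y
    have h := intervalIntegral.integral_Iic_sub_Iic
      (a := (0:ℝ)) (b := y) (μ := volume) hint.integrableOn hint.integrableOn
    rw [stdΦ, ← h]
    ring
  rw [heq]
  have h1 : HasDerivAt (fun y : ℝ => ∫ t in (0:ℝ)..y, Real.exp (-t ^ 2 / 2))
      (Real.exp (-x ^ 2 / 2)) x :=
    intervalIntegral.integral_hasDerivAt_right hint.intervalIntegrable
      (hint.aestronglyMeasurable.stronglyMeasurableAtFilter)
      (Continuous.continuousAt (by continuity))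
  exact (h1.const_add _).const_mul _

theorem stmt3 (Δ σ : ℝ) (hΔ : 0 < Δ) (hσ : 0 < σ) :
    AntitoneOn (fun ε : ℝ =>
      stdΦ (Δ / (2 * σ) - ε * σ / Δ) - Real.exp ε * stdΦ (-(Δ / (2 * σ)) - ε * σ / Δ))
      (Set.Ici 0) := by
  set a : ℝ := Δ / (2 * σ) with ha
  set c : ℝ := σ / Δ with hcdef
  have hac : a * c = 1/2 := by
    rw [ha, hcdef]
    field_simp
  have hf : ∀ ε : ℝ, HasDerivAt (fun ε : ℝ =>
      stdΦ (a - ε * σ / Δ) - Real.exp ε * stdΦ (-a - ε * σ / Δ))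
      (-(Real.exp ε * stdΦ (-a - ε * σ / Δ))) ε := by
    intro ε
    have hin1 : HasDerivAt (fun x : ℝ => a - x * σ / Δ) (-c) ε := by
      have := (((hasDerivAt_id ε).mul_const σ).div_const Δ).const_sub a
      simpa [hcdef] using this
    have hin2 : HasDerivAt (fun x : ℝ => -a - x * σ / Δ) (-c) ε := by
      have := (((hasDerivAt_id ε).mul_const σ).div_const Δ).const_sub (-a)
      simpa [hcdef] using this
    have h1 : HasDerivAt (fun ε : ℝ => stdΦ (a - ε * σ / Δ))
        ((Real.sqrt (2 * Real.pi))⁻¹ * Real.exp (-(a - ε * σ / Δ) ^ 2 / 2) * (-c)) ε :=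
      (stdΦ_hasDerivAt _).comp ε hin1
    have h2 : HasDerivAt (fun ε : ℝ => stdΦ (-a - ε * σ / Δ))
        ((Real.sqrt (2 * Real.pi))⁻¹ * Real.exp (-(-a - ε * σ / Δ) ^ 2 / 2) * (-c)) ε :=
      (stdΦ_hasDerivAt _).comp ε hin2
    have h3 : HasDerivAt (fun ε : ℝ => Real.exp ε * stdΦ (-a - ε * σ / Δ))
        (Real.exp ε * stdΦ (-a - ε * σ / Δ) +
          Real.exp ε * ((Real.sqrt (2 * Real.pi))⁻¹ * Real.exp (-(-a - ε * σ / Δ) ^ 2 / 2) * (-c))) ε :=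
      (Real.hasDerivAt_exp ε).mul h2
    have hres := h1.sub h3
    have hs : ε * σ / Δ = ε * c := by rw [hcdef, mul_div_assoc]
    have hkey : Real.exp ε * Real.exp (-(-a - ε * σ / Δ) ^ 2 / 2)
        = Real.exp (-(a - ε * σ / Δ) ^ 2 / 2) := by
      rw [← Real.exp_add, hs]
      congr 1
      linear_combination (-2*ε) * hac
    have heq2 : (Real.sqrt (2 * Real.pi))⁻¹ * Real.exp (-(a - ε * σ / Δ) ^ 2 / 2) * (-c) -
        (Real.exp ε * stdΦ (-a - ε * σ / Δ) +
          Real.exp ε * ((Real.sqrt (2 * Real.pi))⁻¹ * Real.exp (-(-a - ε * σ / Δ) ^ 2 / 2) * (-c)))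
        = -(Real.exp ε * stdΦ (-a - ε * σ / Δ)) := by
      rw [← hkey]
      ring
    rw [heq2] at hres
    exact hres
  apply antitoneOn_of_deriv_nonpos (convex_Ici 0)
  · exact fun x _ => (hf x).continuousAt.continuousWithinAt
  · exact fun x _ => (hf x).differentiableAt.differentiableWithinAt
  · intro x _
    rw [(hf x).deriv]
    simp only [neg_nonpos]
    exact mul_nonneg (Real.exp_pos x).le (stdΦ_nonneg _)
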